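/- If ρ and σ are two fixed point states of a trace-preserving completely positive map E, and λ, γ are real numbers such that λρ + γσ is a nonzero positive operator, then λρ + γσ is also a fixed point of E. Consequently, a minimal fixed point state with a given support is unique up to positive scalar multiple. -/

import Mathlib

open Matrix Filter Topology
open scoped ComplexOrder

/-- The matrix of the orthogonal projection onto a subspace `X`. -/
noncomputable def projMat {d : ℕ} (X : Submodule ℂ (EuclideanSpace ℂ (Fin d))) :
    Matrix (Fin d) (Fin d) ℂ :=
  Matrix.toEuclideanLin.symm ((X.subtypeL.comp (X.orthogonalProjection)).toLinearMap)

/-- The support of an operator: the range of the associated linear map. -/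
noncomputable def matSupp {d : ℕ} (A : Matrix (Fin d) (Fin d) ℂ) :
    Submodule ℂ (EuclideanSpace ℂ (Fin d)) :=
  LinearMap.range (Matrix.toEuclideanLin A)

/-- The outer product `|v⟩⟨v|`. -/
noncomputable def outer {d : ℕ} (v : EuclideanSpace ℂ (Fin d)) : Matrix (Fin d) (Fin d) ℂ :=
  fun i j => v i * star (v j)

/-- The completely positive map `A ↦ ∑ i, E i * A * (E i)†` given by Kraus operators `E`. -/
noncomputable def krausMap {d m : ℕ} (E : Fin m → Matrix (Fin d) (Fin d) ℂ)
    (A : Matrix (Fin d) (Fin d) ℂ) : Matrix (Fin d) (Fin d) ℂ :=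
  ∑ i, E i * A * (E i)ᴴ

/-- A fixed point state: a nonzero positive semidefinite operator with `E(ρ) = ρ`. -/
noncomputable def FixedState {d m : ℕ} (E : Fin m → Matrix (Fin d) (Fin d) ℂ)
    (ρ : Matrix (Fin d) (Fin d) ℂ) : Prop :=
  ρ.PosSemidef ∧ ρ ≠ 0 ∧ krausMap E ρ = ρ

section Stmt8Aux

open scoped InnerProductSpace

variable {d : ℕ}

/-- The quadratic form of a matrix. -/
noncomputable def q (A : Matrix (Fin d) (Fin d) ℂ) (x : Fin d → ℂ) : ℂ := star x ⬝ᵥ A *ᵥ x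

lemma q_star {A : Matrix (Fin d) (Fin d) ℂ} (hA : A.IsHermitian) (x : Fin d → ℂ) :
    star (q A x) = q A x := by
  calc star (q A x) = star (A *ᵥ x) ⬝ᵥ x := by
        rw [q, star_dotProduct, star_star, dotProduct_comm]
    _ = q A x := by rw [q, star_mulVec, hA.eq, dotProduct_mulVec]

lemma q_im {A : Matrix (Fin d) (Fin d) ℂ} (hA : A.IsHermitian) (x : Fin d → ℂ) :
    (q A x).im = 0 := by
  have h2 := congrArg Complex.im (q_star hA x)
  rw [Complex.star_def, Complex.conj_im] at h2
  linarith

lemma q_eq_re {A : Matrix (Fin d) (Fin d) ℂ} (hA : A.IsHermitian) (x : Fin d → ℂ) :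
    q A x = ((q A x).re : ℂ) := by
  rw [Complex.ext_iff]
  simp [q_im hA]

lemma q_sub (A B : Matrix (Fin d) (Fin d) ℂ) (x : Fin d → ℂ) :
    q (A - B) x = q A x - q B x := by
  unfold q; rw [sub_mulVec, dotProduct_sub]

lemma q_smul (c : ℂ) (A : Matrix (Fin d) (Fin d) ℂ) (x : Fin d → ℂ) :
    q (c • A) x = c * q A x := by
  unfold q; rw [smul_mulVec, dotProduct_smul, smul_eq_mul]

lemma q_nonneg {A : Matrix (Fin d) (Fin d) ℂ} (hA : A.PosSemidef) (x : Fin d → ℂ) :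
    0 ≤ (q A x).re := hA.re_dotProduct_nonneg x

lemma posSemidef_iff_q {M : Matrix (Fin d) (Fin d) ℂ} (hM : M.IsHermitian) :
    M.PosSemidef ↔ ∀ x, 0 ≤ (q M x).re := by
  constructor
  · intro h x; exact h.re_dotProduct_nonneg x
  · intro h
    refine posSemidef_iff_dotProduct_mulVec.mpr ⟨hM, fun x => ?_⟩
    show 0 ≤ q M x
    rw [q_eq_re hM x]
    exact Complex.zero_le_real.mpr (h x)

lemma herm_sub_real_smul {ρ σ : Matrix (Fin d) (Fin d) ℂ} (hρ : ρ.IsHermitian)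
    (hσ : σ.IsHermitian) (t : ℝ) : (σ - (t : ℂ) • ρ).IsHermitian := by
  apply hσ.sub
  show ((t : ℂ) • ρ)ᴴ = (t : ℂ) • ρ
  rw [conjTranspose_smul, hρ.eq, Complex.star_def, Complex.conj_ofReal]

lemma q_sub_real_smul_re {ρ σ : Matrix (Fin d) (Fin d) ℂ} (t : ℝ) (x : Fin d → ℂ) :
    (q (σ - (t : ℂ) • ρ) x).re = (q σ x).re - t * (q ρ x).re := by
  rw [q_sub, q_smul, Complex.sub_re, Complex.re_ofReal_mul]

lemma ker_toEuclideanLin_mem {A : Matrix (Fin d) (Fin d) ℂ} (x : EuclideanSpace ℂ (Fin d)) :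
    x ∈ LinearMap.ker (Matrix.toEuclideanLin A) ↔ A *ᵥ (WithLp.equiv 2 _ x) = 0 := by
  rw [LinearMap.mem_ker, Matrix.toEuclideanLin_apply]
  constructor
  · intro h
    have := congrArg (WithLp.equiv 2 (Fin d → ℂ)) h
    simpa using this
  · intro h; change A *ᵥ x.ofLp = 0 at h; rw [h]; simp

lemma range_eq_ker_orth {A : Matrix (Fin d) (Fin d) ℂ} (hA : A.IsHermitian) :
    LinearMap.range (Matrix.toEuclideanLin A) = (LinearMap.ker (Matrix.toEuclideanLin A))ᗮ := by
  have hsymm := Matrix.isHermitian_iff_isSymmetric.mp hA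
  apply Submodule.eq_of_le_of_finrank_eq
  · rintro y ⟨x, rfl⟩
    intro u hu
    rw [LinearMap.mem_ker] at hu
    rw [← hsymm u x, hu, inner_zero_left]
  · have h1 := LinearMap.finrank_range_add_finrank_ker (Matrix.toEuclideanLin A)
    have h2 := Submodule.finrank_add_finrank_orthogonal
      (K := LinearMap.ker (Matrix.toEuclideanLin A))
    omega

lemma inner_eq_q (A : Matrix (Fin d) (Fin d) ℂ) (y : EuclideanSpace ℂ (Fin d)) :
    ⟪y, Matrix.toEuclideanLin A y⟫_ℂ = star (WithLp.equiv 2 _ y) ⬝ᵥ A *ᵥ (WithLp.equiv 2 _ y) := by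
  rw [EuclideanSpace.inner_eq_star_dotProduct, dotProduct_comm]; rfl

lemma toEuclideanLin_eq_zero_iff {A : Matrix (Fin d) (Fin d) ℂ} :
    Matrix.toEuclideanLin A = 0 ↔ A = 0 := by
  constructor
  · intro h
    have : Matrix.toEuclideanLin A = Matrix.toEuclideanLin (0 : Matrix (Fin d) (Fin d) ℂ) := by
      simpa using h
    exact Matrix.toEuclideanLin.injective this
  · rintro rfl; simp

lemma matSupp_le_iff {A B : Matrix (Fin d) (Fin d) ℂ} (hA : A.IsHermitian) (hB : B.IsHermitian) :
    matSupp A ≤ matSupp B ↔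
      LinearMap.ker (Matrix.toEuclideanLin B) ≤ LinearMap.ker (Matrix.toEuclideanLin A) := by
  rw [matSupp, matSupp, range_eq_ker_orth hA, range_eq_ker_orth hB]
  constructor
  · intro h
    have := Submodule.orthogonal_le h
    rwa [Submodule.orthogonal_orthogonal, Submodule.orthogonal_orthogonal] at this
  · exact Submodule.orthogonal_le

lemma exists_pos_smul_le {A B : Matrix (Fin d) (Fin d) ℂ} (hA : A.PosSemidef) (hB : B.PosSemidef)
    (hA0 : A ≠ 0) (hB0 : B ≠ 0)
    (hker : LinearMap.ker (Matrix.toEuclideanLin A) = LinearMap.ker (Matrix.toEuclideanLin B)) :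
    ∃ δ : ℝ, 0 < δ ∧ ∀ y : EuclideanSpace ℂ (Fin d),
      δ * (⟪y, Matrix.toEuclideanLin B y⟫_ℂ).re ≤ (⟪y, Matrix.toEuclideanLin A y⟫_ℂ).re := by
  set TA := Matrix.toEuclideanLin A with hTA
  set TB := Matrix.toEuclideanLin B with hTB
  have hsymmA := Matrix.isHermitian_iff_isSymmetric.mp hA.1
  have hsymmB := Matrix.isHermitian_iff_isSymmetric.mp hB.1
  set K := (LinearMap.ker TA)ᗮ with hK
  have hreA : ∀ y : EuclideanSpace ℂ (Fin d), 0 ≤ (⟪y, TA y⟫_ℂ).re := by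
    intro y; rw [inner_eq_q]; exact hA.re_dotProduct_nonneg _
  -- K is nontrivial
  have hKne : K ≠ ⊥ := by
    intro h
    apply hA0
    rw [← toEuclideanLin_eq_zero_iff, ← hTA, ← LinearMap.ker_eq_top]
    rw [hK, Submodule.orthogonal_eq_bot_iff] at h
    exact h
  -- the unit sphere of K
  set s : Set (EuclideanSpace ℂ (Fin d)) := {y | y ∈ K ∧ ‖y‖ = 1} with hs
  have hsne : s.Nonempty := by
    obtain ⟨v, hvK, hv0⟩ := Submodule.exists_mem_ne_zero_of_ne_bot hKne
    refine ⟨(‖v‖ : ℂ)⁻¹ • v, K.smul_mem _ hvK, ?_⟩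
    rw [norm_smul]
    simp [norm_ne_zero_iff.mpr hv0, inv_mul_cancel₀, norm_ne_zero_iff.mpr hv0]
  have hscompact : IsCompact s := by
    apply Metric.isCompact_of_isClosed_isBounded
    · exact (Submodule.closed_of_finiteDimensional K).inter
        (isClosed_eq continuous_norm continuous_const)
    · apply Bornology.IsBounded.subset (Metric.isBounded_closedBall (x := 0) (r := 1))
      intro y hy
      simp [Metric.mem_closedBall, dist_eq_norm, hy.2]
  have hTAcont : Continuous TA := TA.continuous_of_finiteDimensional
  have hfcont : Continuous (fun y : EuclideanSpace ℂ (Fin d) => (⟪y, TA y⟫_ℂ).re) :=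
    Complex.continuous_re.comp (Continuous.inner continuous_id hTAcont)
  obtain ⟨y₀, hy₀s, hmin'⟩ := hscompact.exists_isMinOn hsne hfcont.continuousOn
  have hmin : ∀ y ∈ s, (⟪y₀, TA y₀⟫_ℂ).re ≤ (⟪y, TA y⟫_ℂ).re := fun y hy => hmin' hy
  set μ := (⟪y₀, TA y₀⟫_ℂ).re with hμ
  have hμpos : 0 < μ := by
    rcases lt_or_eq_of_le (hreA y₀) with h | h
    · exact h
    · exfalso
      have hq0 : ⟪y₀, TA y₀⟫_ℂ = 0 := by
        have him : star (⟪y₀, TA y₀⟫_ℂ) = ⟪y₀, TA y₀⟫_ℂ := by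
          rw [Complex.star_def, inner_conj_symm]
          exact hsymmA y₀ y₀
        apply Complex.ext
        · exact h.symm
        · have h2 := congrArg Complex.im him
          rw [Complex.star_def, Complex.conj_im] at h2
          simp only [Complex.zero_im]
          linarith
      have hker0 : TA y₀ = 0 := by
        rw [inner_eq_q] at hq0
        have := (hA.dotProduct_mulVec_zero_iff (WithLp.equiv 2 _ y₀)).mp hq0
        change A *ᵥ y₀.ofLp = 0 at this
        rw [hTA, Matrix.toEuclideanLin_apply, this]
        simp
      have : y₀ ∈ LinearMap.ker TA ⊓ K := ⟨hker0, hy₀s.1⟩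
      rw [hK, Submodule.inf_orthogonal_eq_bot] at this
      have : y₀ = 0 := by simpa using this
      have h1 := hy₀s.2
      rw [this] at h1
      simp at h1
  -- scaling
  have hscale : ∀ (T : EuclideanSpace ℂ (Fin d) →ₗ[ℂ] EuclideanSpace ℂ (Fin d))
      (c : ℝ) (y : EuclideanSpace ℂ (Fin d)),
      (⟪(c : ℂ) • y, T ((c : ℂ) • y)⟫_ℂ).re = c ^ 2 * (⟪y, T y⟫_ℂ).re := by
    intro T c y
    rw [LinearMap.map_smul, inner_smul_left, inner_smul_right, Complex.conj_ofReal, ← mul_assoc,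
      ← Complex.ofReal_mul, Complex.re_ofReal_mul]
    ring
  -- lower bound on K
  have hlow : ∀ v ∈ K, μ * ‖v‖ ^ 2 ≤ (⟪v, TA v⟫_ℂ).re := by
    intro v hv
    rcases eq_or_ne v 0 with rfl | hv0
    · simp
    · have hnv : ‖v‖ ≠ 0 := norm_ne_zero_iff.mpr hv0
      have hvs : ((‖v‖ : ℂ)⁻¹ • v) ∈ s := by
        refine ⟨K.smul_mem _ hv, ?_⟩
        rw [norm_smul]; simp [hnv]
      have h1 := hmin _ hvs
      have h2 : ((‖v‖ : ℂ)⁻¹ • v) = ((‖v‖⁻¹ : ℝ) : ℂ) • v := by rw [Complex.ofReal_inv]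
      rw [h2, hscale] at h1
      have h3 : (‖v‖⁻¹) ^ 2 * (⟪v, TA v⟫_ℂ).re = (⟪v, TA v⟫_ℂ).re / ‖v‖ ^ 2 := by
        field_simp
      rw [h3, le_div_iff₀ (by positivity)] at h1
      linarith
  -- upper bound for B
  set C := ‖LinearMap.toContinuousLinearMap TB‖ with hC
  have hCb : ∀ y : EuclideanSpace ℂ (Fin d), (⟪y, TB y⟫_ℂ).re ≤ C * ‖y‖ ^ 2 := by
    intro y
    calc (⟪y, TB y⟫_ℂ).re ≤ ‖y‖ * ‖TB y‖ := by simpa using re_inner_le_norm (𝕜 := ℂ) y (TB y)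
      _ ≤ ‖y‖ * (C * ‖y‖) := by
          refine mul_le_mul_of_nonneg_left ?_ (norm_nonneg y)
          exact (LinearMap.toContinuousLinearMap TB).le_opNorm y
      _ = C * ‖y‖ ^ 2 := by ring
  have hCpos : 0 < C := by
    rcases lt_or_eq_of_le (norm_nonneg (LinearMap.toContinuousLinearMap TB)) with h | h
    · exact h
    · exfalso
      apply hB0
      rw [← toEuclideanLin_eq_zero_iff, ← hTB]
      have h0 : LinearMap.toContinuousLinearMap TB = 0 := by
        rw [← norm_eq_zero]; exact h.symm
      apply LinearMap.ext
      intro y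
      have := DFunLike.congr_fun h0 y
      simpa using this
  refine ⟨μ / C, div_pos hμpos hCpos, ?_⟩
  intro y
  set v : EuclideanSpace ℂ (Fin d) := (K.orthogonalProjection y : EuclideanSpace ℂ (Fin d)) with hv
  have hvK : v ∈ K := (K.orthogonalProjection y).2
  have hwmem : y - v ∈ Kᗮ := K.sub_starProjection_mem_orthogonal y
  have hKorth : Kᗮ = LinearMap.ker TA := by
    rw [hK, Submodule.orthogonal_orthogonal]
  have hTAw : TA (y - v) = 0 := by
    rw [← LinearMap.mem_ker, ← hKorth]; exact hwmem
  have hTBw : TB (y - v) = 0 := by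
    rw [← LinearMap.mem_ker, ← hker]
    rw [← hKorth] at *; exact hwmem
  have hdecomp : ∀ (T : EuclideanSpace ℂ (Fin d) →ₗ[ℂ] EuclideanSpace ℂ (Fin d)),
      T.IsSymmetric → T (y - v) = 0 → ⟪y, T y⟫_ℂ = ⟪v, T v⟫_ℂ := by
    intro T hsymm hw0
    have hy : y = v + (y - v) := by abel
    calc ⟪y, T y⟫_ℂ = ⟪v + (y - v), T v + T (y - v)⟫_ℂ := by rw [← map_add, ← hy]
      _ = ⟪v, T v⟫_ℂ + ⟪y - v, T v⟫_ℂ + (⟪v, T (y - v)⟫_ℂ + ⟪y - v, T (y - v)⟫_ℂ) := by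
          rw [inner_add_left, inner_add_right, inner_add_right]; ring
      _ = ⟪v, T v⟫_ℂ := by
          rw [hw0, ← hsymm (y - v) v, hw0]
          simp
  rw [hdecomp TA hsymmA hTAw, hdecomp TB hsymmB hTBw]
  calc μ / C * (⟪v, TB v⟫_ℂ).re ≤ μ / C * (C * ‖v‖ ^ 2) := by
        apply mul_le_mul_of_nonneg_left (hCb v) (le_of_lt (div_pos hμpos hCpos))
    _ = μ * ‖v‖ ^ 2 := by field_simp
    _ ≤ (⟪v, TA v⟫_ℂ).re := hlow v hvK

lemma krausMap_add {m : ℕ} (E : Fin m → Matrix (Fin d) (Fin d) ℂ)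
    (A B : Matrix (Fin d) (Fin d) ℂ) : krausMap E (A + B) = krausMap E A + krausMap E B := by
  simp [krausMap, Matrix.mul_add, Matrix.add_mul, Finset.sum_add_distrib]

lemma krausMap_smul {m : ℕ} (E : Fin m → Matrix (Fin d) (Fin d) ℂ) (c : ℂ)
    (A : Matrix (Fin d) (Fin d) ℂ) : krausMap E (c • A) = c • krausMap E A := by
  simp [krausMap, Matrix.mul_smul, Matrix.smul_mul, Finset.smul_sum]

lemma krausMap_sub {m : ℕ} (E : Fin m → Matrix (Fin d) (Fin d) ℂ)
    (A B : Matrix (Fin d) (Fin d) ℂ) : krausMap E (A - B) = krausMap E A - krausMap E B := by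
  simp [krausMap, Matrix.mul_sub, Matrix.sub_mul, Finset.sum_sub_distrib]

end Stmt8Aux

/-- Real combinations of fixed point states that are nonzero and positive are again
fixed points; consequently a minimal fixed point state with a given support is unique
up to a positive scalar. -/
theorem stmt8 {d m : ℕ} (E : Fin m → Matrix (Fin d) (Fin d) ℂ)
    (hE : ∑ i, (E i)ᴴ * E i = 1) :
    (∀ (ρ σ : Matrix (Fin d) (Fin d) ℂ) (l g : ℝ), FixedState E ρ → FixedState E σ →
      (l : ℂ) • ρ + (g : ℂ) • σ ≠ 0 → ((l : ℂ) • ρ + (g : ℂ) • σ).PosSemidef →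
      krausMap E ((l : ℂ) • ρ + (g : ℂ) • σ) = (l : ℂ) • ρ + (g : ℂ) • σ) ∧
    (∀ ρ σ : Matrix (Fin d) (Fin d) ℂ, FixedState E ρ → FixedState E σ →
      (∀ τ : Matrix (Fin d) (Fin d) ℂ, FixedState E τ → matSupp τ ≤ matSupp ρ → matSupp τ = matSupp ρ) →
      (∀ τ : Matrix (Fin d) (Fin d) ℂ, FixedState E τ → matSupp τ ≤ matSupp σ → matSupp τ = matSupp σ) →
      matSupp ρ = matSupp σ → ∃ c : ℝ, 0 < c ∧ σ = (c : ℂ) • ρ) := by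
  constructor
  · intro ρ σ l g hρ hσ _ _
    rw [krausMap_add, krausMap_smul, krausMap_smul, hρ.2.2, hσ.2.2]
  · intro ρ σ hρ hσ hminρ hminσ hsupp
    -- there is a vector where ρ's quadratic form is positive
    obtain ⟨x₀, hx₀⟩ : ∃ x, 0 < (q ρ x).re := by
      by_contra hcon
      push_neg at hcon
      apply hρ.2.1
      have hall : ∀ x, ρ *ᵥ x = 0 := by
        intro x
        apply (hρ.1.dotProduct_mulVec_zero_iff x).mp
        show q ρ x = 0
        rw [q_eq_re hρ.1.1 x]
        have := le_antisymm (hcon x) (q_nonneg hρ.1 x)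
        rw [this]
        simp
      ext i j
      have := congrFun (hall (Pi.single j 1)) i
      simpa [Matrix.mulVec_single] using this
    -- the set of admissible coefficients
    set S : Set ℝ := {t : ℝ | (σ - (t : ℂ) • ρ).PosSemidef} with hS
    have hchar : ∀ t : ℝ, t ∈ S ↔ ∀ x, t * (q ρ x).re ≤ (q σ x).re := by
      intro t
      rw [hS, Set.mem_setOf_eq, posSemidef_iff_q (herm_sub_real_smul hρ.1.1 hσ.1.1 t)]
      constructor
      · intro h x
        have := h x
        rw [q_sub_real_smul_re] at this
        linarith
      · intro h x
        rw [q_sub_real_smul_re]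
        have := h x
        linarith
    have h0S : (0 : ℝ) ∈ S := by
      rw [hS, Set.mem_setOf_eq]
      simpa using hσ.1
    have hbdd : BddAbove S := by
      refine ⟨(q σ x₀).re / (q ρ x₀).re, fun t ht => ?_⟩
      rw [le_div_iff₀ hx₀]
      exact (hchar t).mp ht x₀
    have hclosed : IsClosed S := by
      have hSeq : S = ⋂ x : Fin d → ℂ, {t : ℝ | t * (q ρ x).re ≤ (q σ x).re} := by
        ext t
        simp only [Set.mem_iInter, Set.mem_setOf_eq]
        exact hchar t
      rw [hSeq]
      exact isClosed_iInter fun x =>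
        isClosed_le (continuous_id.mul continuous_const) continuous_const
    set lam := sSup S with hlam
    have hlamS : lam ∈ S := hclosed.csSup_mem ⟨0, h0S⟩ hbdd
    have hlam0 : 0 ≤ lam := le_csSup hbdd h0S
    set τ := σ - (lam : ℂ) • ρ with hτdef
    have hτpsd : τ.PosSemidef := hlamS
    rcases eq_or_ne τ 0 with hτ0 | hτ0
    · refine ⟨lam, ?_, ?_⟩
      · rcases lt_or_eq_of_le hlam0 with h | h
        · exact h
        · exfalso
          apply hσ.2.1
          rw [hτdef, ← h] at hτ0
          simpa using sub_eq_zero.mp hτ0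
      · rw [hτdef] at hτ0
        exact sub_eq_zero.mp hτ0
    · exfalso
      -- τ is a fixed state
      have hτfix : FixedState E τ := by
        refine ⟨hτpsd, hτ0, ?_⟩
        rw [hτdef, krausMap_sub, krausMap_smul, hρ.2.2, hσ.2.2]
      -- supp τ ≤ supp σ
      have hτle : matSupp τ ≤ matSupp σ := by
        rw [matSupp_le_iff hτpsd.1 hσ.1.1]
        intro y hy
        rw [ker_toEuclideanLin_mem] at hy ⊢
        set x := WithLp.equiv 2 (Fin d → ℂ) y with hx
        have hqσ : q σ x = 0 := by rw [q, hy, dotProduct_zero]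
        apply (hτpsd.dotProduct_mulVec_zero_iff x).mp
        have h1 : (q τ x).re = 0 := by
          have h2 : (q τ x).re = (q σ x).re - lam * (q ρ x).re := q_sub_real_smul_re lam x
          have h3 : 0 ≤ lam * (q ρ x).re := mul_nonneg hlam0 (q_nonneg hρ.1 x)
          have h4 : 0 ≤ (q τ x).re := q_nonneg hτpsd x
          rw [hqσ] at h2
          simp only [Complex.zero_re] at h2
          linarith
        rw [show star x ⬝ᵥ τ *ᵥ x = q τ x from rfl, q_eq_re hτpsd.1 x, h1]
        simp
      have hτsupp : matSupp τ = matSupp σ := hminσ τ hτfix hτle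
      -- kernels of τ and ρ agree
      have hkerτρ : LinearMap.ker (Matrix.toEuclideanLin τ) =
          LinearMap.ker (Matrix.toEuclideanLin ρ) := by
        have h1 : matSupp τ = matSupp ρ := by rw [hτsupp, hsupp]
        rw [matSupp, matSupp, range_eq_ker_orth hτpsd.1, range_eq_ker_orth hρ.1.1] at h1
        have := congrArg Submodule.orthogonal h1
        rwa [Submodule.orthogonal_orthogonal, Submodule.orthogonal_orthogonal] at this
      obtain ⟨δ, hδpos, hδ⟩ := exists_pos_smul_le hτpsd hρ.1 hτ0 hρ.2.1 hkerτρ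
      have hmem : lam + δ ∈ S := by
        rw [hchar]
        intro x
        have h1 := hδ ((WithLp.equiv 2 (Fin d → ℂ)).symm x)
        rw [inner_eq_q, inner_eq_q] at h1
        simp only [Equiv.apply_symm_apply] at h1
        have h2 : (q τ x).re = (q σ x).re - lam * (q ρ x).re := q_sub_real_smul_re lam x
        have h3 : star x ⬝ᵥ ρ *ᵥ x = q ρ x := rfl
        have h4 : star x ⬝ᵥ τ *ᵥ x = q τ x := rfl
        rw [h3, h4] at h1
        nlinarith [h1, h2]
      have : lam + δ ≤ lam := le_csSup hbdd hmem
      linarith
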